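/- Let Q = N(0, I_d) and P_Δ = π N(0,I_d) + (1-π) N(Δ, I_d) with π ∈ (0,1). Then the Fisher divergence F(Δ) := E_{x∼Q}[‖∇log p_Δ(x) − ∇log q(x)‖²] satisfies F(Δ) = o(exp(−‖Δ‖²/32)) as ‖Δ‖ → ∞; in particular F(Δ) ≤ ((1-π)² π^{-2} + 5^d) ‖Δ‖² exp(−‖Δ‖²/17). -/

import Mathlib

open Real MeasureTheory Filter Asymptotics InnerProductSpace
open scoped ENNReal NNReal

section helpers

variable {E : Type*} [NormedAddCommGroup E] [InnerProductSpace ℝ E] [CompleteSpace E]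

private lemma fd_half_norm (v x : E) :
    HasFDerivAt (fun y : E => -‖y - v‖^2 / 2) (toDual ℝ E (v - x)) x := by
  have h2 := (((hasFDerivAt_id x).sub_const v).inner ℝ ((hasFDerivAt_id x).sub_const v)).const_mul
    (-1/2 : ℝ)
  convert h2 using 1
  · rfl
  · rfl
  · funext y
    simp [real_inner_self_eq_norm_sq]
    ring
  · ext h
    simp [real_inner_smul_left, inner_sub_left, inner_sub_right, real_inner_comm]
    ring

private lemma gradAt_gauss (c : ℝ) (v x : E) :
    HasGradientAt (fun y : E => c * Real.exp (-‖y - v‖^2 / 2))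
      ((c * Real.exp (-‖x - v‖^2 / 2)) • (v - x)) x := by
  have h1 : HasFDerivAt (fun y : E => c * Real.exp (-‖y - v‖^2 / 2))
      (c • (Real.exp (-‖x - v‖^2 / 2) • toDual ℝ E (v - x))) x :=
    ((Real.hasDerivAt_exp _).comp_hasFDerivAt x (fd_half_norm v x)).const_mul c
  rw [hasGradientAt_iff_hasFDerivAt]
  convert h1 using 1
  · rfl
  rw [smul_smul]
  exact _root_.map_smul _ _ _

private lemma gradAt_sum (c1 c2 : ℝ) (v1 v2 x : E) :
    HasGradientAt (fun y : E => c1 * Real.exp (-‖y - v1‖^2 / 2) + c2 * Real.exp (-‖y - v2‖^2 / 2))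
      ((c1 * Real.exp (-‖x - v1‖^2 / 2)) • (v1 - x)
        + (c2 * Real.exp (-‖x - v2‖^2 / 2)) • (v2 - x)) x := by
  rw [hasGradientAt_iff_hasFDerivAt]
  rw [map_add]
  exact (gradAt_gauss c1 v1 x).add (gradAt_gauss c2 v2 x)

private lemma gradAt_log_sum (c1 c2 : ℝ) (v1 v2 x : E)
    (hpos : 0 < c1 * Real.exp (-‖x - v1‖^2 / 2) + c2 * Real.exp (-‖x - v2‖^2 / 2)) :
    HasGradientAt
      (fun y : E => Real.log (c1 * Real.exp (-‖y - v1‖^2 / 2) + c2 * Real.exp (-‖y - v2‖^2 / 2)))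
      ((c1 * Real.exp (-‖x - v1‖^2 / 2) + c2 * Real.exp (-‖x - v2‖^2 / 2))⁻¹ •
        ((c1 * Real.exp (-‖x - v1‖^2 / 2)) • (v1 - x)
          + (c2 * Real.exp (-‖x - v2‖^2 / 2)) • (v2 - x))) x := by
  have h1 := gradAt_sum c1 c2 v1 v2 x
  rw [hasGradientAt_iff_hasFDerivAt] at h1 ⊢
  have h2 := (Real.hasDerivAt_log hpos.ne').comp_hasFDerivAt x h1
  convert h2 using 1
  · rfl
  · rfl
  exact _root_.map_smul _ _ _

end helpers

private lemma gauss_int (d : ℕ) (v : EuclideanSpace ℝ (Fin d)) :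
    ∫ x : EuclideanSpace ℝ (Fin d), Real.exp (-‖x - v‖^2 / 2)
      = (2 * Real.pi) ^ ((d:ℝ)/2) := by
  have h2 := integral_sub_right_eq_self (μ := (volume : Measure (EuclideanSpace ℝ (Fin d))))
    (fun y => Real.exp (-(1/2) * ‖y‖^2)) v
  beta_reduce at h2
  have h1 : ∀ x : EuclideanSpace ℝ (Fin d), -‖x - v‖^2 / 2 = -(1/2) * ‖x - v‖^2 :=
    fun x => by ring
  simp_rw [h1]
  rw [h2, GaussianFourier.integral_rexp_neg_mul_sq_norm (by norm_num : (0:ℝ) < 1/2)]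
  rw [finrank_euclideanSpace_fin, show (π/(1/2):ℝ) = 2*π by ring]

private lemma gauss_integrable (d : ℕ) (v : EuclideanSpace ℝ (Fin d)) :
    Integrable (fun x : EuclideanSpace ℝ (Fin d) => Real.exp (-‖x - v‖^2 / 2)) := by
  have h := (GaussianFourier.integrable_cexp_neg_mul_sq_norm_add (b := (1/2:ℂ)) (by norm_num) 0
    (0 : EuclideanSpace ℝ (Fin d))).norm
  have h2 : Integrable (fun x : EuclideanSpace ℝ (Fin d) => Real.exp (-‖x‖^2 / 2)) := by
    convert h using 2 with x
    simp [Complex.norm_exp, ← Complex.ofReal_pow]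
    ring_nf
  have := h2.comp_sub_right v
  simpa using this

set_option maxHeartbeats 1000000 in
/-- the Fisher divergence between `Q = N(0, I_d)` and the mixture
`P_Δ = π N(0,I_d) + (1-π) N(Δ, I_d)` is `o(exp(-‖Δ‖²/32))` as `‖Δ‖ → ∞`; in
particular it is bounded by `((1-π)² π⁻² + 5^d) ‖Δ‖² exp(-‖Δ‖²/17)`. -/
theorem fisher_divergence_decay
    (d : ℕ) (π' : ℝ) (hπ : π' ∈ Set.Ioo (0:ℝ) 1)
    (q : EuclideanSpace ℝ (Fin d) → ℝ)
    (pΔ : EuclideanSpace ℝ (Fin d) → EuclideanSpace ℝ (Fin d) → ℝ)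
    (hq : ∀ x, q x = (2 * Real.pi) ^ (-(d:ℝ)/2) * Real.exp (-‖x‖^2 / 2))
    (hp : ∀ Δ x, pΔ Δ x =
      π' * ((2 * Real.pi) ^ (-(d:ℝ)/2) * Real.exp (-‖x‖^2 / 2)) +
      (1 - π') * ((2 * Real.pi) ^ (-(d:ℝ)/2) * Real.exp (-‖x - Δ‖^2 / 2)))
    (Q : Measure (EuclideanSpace ℝ (Fin d)))
    (hQ : Q = volume.withDensity (fun x => ENNReal.ofReal (q x)))
    (F : EuclideanSpace ℝ (Fin d) → ℝ)
    (hF : ∀ Δ, F Δ = ∫ x, ‖gradient (fun y => Real.log (pΔ Δ y)) x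
                          - gradient (fun y => Real.log (q y)) x‖^2 ∂Q) :
    (∀ Δ, F Δ ≤ ((1 - π')^2 * π'⁻¹^2 + 5^d) * ‖Δ‖^2 * Real.exp (-‖Δ‖^2 / 17))
    ∧ F =o[Filter.comap (fun Δ : EuclideanSpace ℝ (Fin d) => ‖Δ‖) atTop]
        (fun Δ => Real.exp (-‖Δ‖^2 / 32)) := by
  obtain ⟨hπ0, hπ1⟩ := hπ
  have hπ1' : 0 < 1 - π' := by linarith
  set c0 : ℝ := (2 * Real.pi) ^ (-(d:ℝ)/2) with hc0def
  have hc0 : 0 < c0 := Real.rpow_pos_of_pos (by positivity) _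
  have hc0' : c0 * (2 * Real.pi) ^ ((d:ℝ)/2) = 1 := by
    rw [hc0def, ← Real.rpow_add (by positivity)]
    rw [show -(d:ℝ)/2 + (d:ℝ)/2 = 0 by ring, Real.rpow_zero]
  -- basic facts about q
  have hqnn : ∀ x : EuclideanSpace ℝ (Fin d), 0 ≤ q x := fun x => by rw [hq]; positivity
  have hqm : Measurable q := by
    have : q = fun x : EuclideanSpace ℝ (Fin d) => c0 * Real.exp (-‖x‖^2 / 2) := funext hq
    rw [this]; fun_prop
  have hqint : Integrable q := by
    refine ((gauss_integrable d 0).const_mul c0).congr (ae_of_all _ fun x => ?_)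
    simp [hq]
  have hqi : ∫ x, q x = 1 := by
    simp_rw [hq]
    rw [integral_const_mul]
    have := gauss_int d 0
    simp only [sub_zero] at this
    rw [this, hc0']
  -- integration against Q as integration against volume
  have hQint : ∀ g : EuclideanSpace ℝ (Fin d) → ℝ, ∫ x, g x ∂Q = ∫ x, q x * g x := by
    intro g
    rw [hQ]
    have hd : (fun x : EuclideanSpace ℝ (Fin d) => ENNReal.ofReal (q x))
        = fun x => ((q x).toNNReal : ℝ≥0∞) := rfl
    rw [hd, integral_withDensity_eq_integral_smul hqm.real_toNNReal]
    congr 1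
    funext x
    rw [NNReal.smul_def, Real.coe_toNNReal _ (hqnn x), smul_eq_mul]
  -- the score-difference formula
  set w : EuclideanSpace ℝ (Fin d) → EuclideanSpace ℝ (Fin d) → ℝ := fun Δ x =>
    (1 - π') * Real.exp (-‖x - Δ‖^2 / 2)
      / (π' * Real.exp (-‖x‖^2 / 2) + (1 - π') * Real.exp (-‖x - Δ‖^2 / 2)) with hwdef
  have hwpos : ∀ Δ x : EuclideanSpace ℝ (Fin d),
      0 < π' * Real.exp (-‖x‖^2 / 2) + (1 - π') * Real.exp (-‖x - Δ‖^2 / 2) :=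
    fun Δ x => by positivity
  have hscore : ∀ Δ x : EuclideanSpace ℝ (Fin d),
      gradient (fun y => Real.log (pΔ Δ y)) x - gradient (fun y => Real.log (q y)) x
        = w Δ x • Δ := by
    intro Δ x
    have hgq : HasGradientAt (fun y : EuclideanSpace ℝ (Fin d) => Real.log (q y)) (-x) x := by
      have hfun : (fun y : EuclideanSpace ℝ (Fin d) => Real.log (q y))
          = fun y => Real.log (c0 * Real.exp (-‖y - 0‖^2 / 2)
              + 0 * Real.exp (-‖y - Δ‖^2 / 2)) := by
        funext y; rw [hq]; simp
      rw [hfun]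
      have hpos : 0 < c0 * Real.exp (-‖x - 0‖^2 / 2) + 0 * Real.exp (-‖x - Δ‖^2 / 2) := by
        positivity
      have h := gradAt_log_sum c0 0 (0 : EuclideanSpace ℝ (Fin d)) Δ x hpos
      have e1 : ((c0 * Real.exp (-‖x - 0‖^2/2) + 0 * Real.exp (-‖x - Δ‖^2/2))⁻¹ •
          ((c0 * Real.exp (-‖x - 0‖^2/2)) • ((0:EuclideanSpace ℝ (Fin d)) - x)
            + (0 * Real.exp (-‖x - Δ‖^2/2)) • (Δ - x))) = -x := by
        rw [zero_mul, zero_smul, add_zero, add_zero, smul_smul,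
          inv_mul_cancel₀ (by positivity), one_smul, zero_sub]
      rw [e1] at h
      exact h
    have hpos : 0 < (π' * c0) * Real.exp (-‖x - 0‖^2 / 2)
        + ((1 - π') * c0) * Real.exp (-‖x - Δ‖^2 / 2) := by positivity
    have hgp : HasGradientAt (fun y : EuclideanSpace ℝ (Fin d) => Real.log (pΔ Δ y))
        (((π' * c0) * Real.exp (-‖x - 0‖^2 / 2)
            + ((1 - π') * c0) * Real.exp (-‖x - Δ‖^2 / 2))⁻¹ •
          (((π' * c0) * Real.exp (-‖x - 0‖^2 / 2)) • ((0:EuclideanSpace ℝ (Fin d)) - x)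
            + (((1 - π') * c0) * Real.exp (-‖x - Δ‖^2 / 2)) • (Δ - x))) x := by
      have hfun : (fun y : EuclideanSpace ℝ (Fin d) => Real.log (pΔ Δ y))
          = fun y => Real.log ((π' * c0) * Real.exp (-‖y - 0‖^2 / 2)
              + ((1 - π') * c0) * Real.exp (-‖y - Δ‖^2 / 2)) := by
        funext y; rw [hp]; rw [sub_zero]; ring_nf
      rw [hfun]
      exact gradAt_log_sum _ _ _ _ _ hpos
    rw [hgp.gradient, hgq.gradient]
    simp only [sub_zero, zero_sub] at hgp ⊢
    set a := Real.exp (-‖x‖^2 / 2)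
    set b := Real.exp (-‖x - Δ‖^2 / 2)
    have hS : (0:ℝ) < π' * c0 * a + (1 - π') * c0 * b := by positivity
    have hST : (π' * c0 * a) • (-x) + ((1 - π') * c0 * b) • (Δ - x)
        = ((1 - π') * c0 * b) • Δ - (π' * c0 * a + (1 - π') * c0 * b) • x := by
      module
    rw [hST, smul_sub, smul_smul, smul_smul, inv_mul_cancel₀ hS.ne', one_smul,
      sub_neg_eq_add, sub_add_cancel]
    congr 1
    simp only [hwdef]
    change _ = (1 - π') * b / (π' * a + (1 - π') * b)
    field_simp
  -- pointwise bound on w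
  set C1 : ℝ := (1 - π')^2 * π'⁻¹^2 with hC1def
  have hC1nn : 0 ≤ C1 := by positivity
  set g : EuclideanSpace ℝ (Fin d) → EuclideanSpace ℝ (Fin d) → ℝ := fun Δ x =>
    Real.exp ((8/17) * (inner ℝ x Δ : ℝ) - (64/289) * ‖Δ‖^2) with hgdef
  have hwnn : ∀ Δ x : EuclideanSpace ℝ (Fin d), 0 ≤ w Δ x := fun Δ x => by
    simp only [hwdef]; exact div_nonneg (by positivity) (hwpos Δ x).le
  have hptwise : ∀ Δ x : EuclideanSpace ℝ (Fin d),
      (w Δ x)^2 ≤ C1 * Real.exp (-‖Δ‖^2 / 17) + g Δ x := by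
    intro Δ x
    set a := Real.exp (-‖x‖^2 / 2) with hadef
    set b := Real.exp (-‖x - Δ‖^2 / 2) with hbdef
    have ha : 0 < a := Real.exp_pos _
    have hb : 0 < b := Real.exp_pos _
    have hS := hwpos Δ x
    by_cases hcase : (inner ℝ x Δ : ℝ) ≤ (8/17) * ‖Δ‖^2
    · -- use the ratio bound
      have h1 : w Δ x ≤ (1 - π') * b / (π' * a) := by
        simp only [hwdef]
        apply div_le_div_of_nonneg_left (by positivity) (by positivity)
        nlinarith
      have h2 : (1 - π') * b / (π' * a)
          = ((1 - π') / π') * Real.exp ((inner ℝ x Δ : ℝ) - ‖Δ‖^2 / 2) := by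
        rw [hadef, hbdef, show (1 - π') * Real.exp (-‖x - Δ‖^2 / 2) / (π' * Real.exp (-‖x‖^2 / 2))
            = ((1 - π') / π') * (Real.exp (-‖x - Δ‖^2 / 2) / Real.exp (-‖x‖^2 / 2)) by ring,
          ← Real.exp_sub]
        congr 2
        rw [norm_sub_sq_real]
        ring
      have h3 : w Δ x ≤ ((1 - π') / π') * Real.exp ((8/17) * ‖Δ‖^2 - ‖Δ‖^2 / 2) := by
        rw [h2] at h1
        refine h1.trans ?_
        have := Real.exp_le_exp.mpr (show (inner ℝ x Δ : ℝ) - ‖Δ‖^2/2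
          ≤ (8/17) * ‖Δ‖^2 - ‖Δ‖^2/2 by linarith)
        exact mul_le_mul_of_nonneg_left this (by positivity)
      have h4 : (w Δ x)^2 ≤ (((1 - π') / π') * Real.exp ((8/17) * ‖Δ‖^2 - ‖Δ‖^2 / 2))^2 :=
        pow_le_pow_left₀ (hwnn Δ x) h3 2
      have h5 : (((1 - π') / π') * Real.exp ((8/17) * ‖Δ‖^2 - ‖Δ‖^2 / 2))^2
          = C1 * Real.exp (-‖Δ‖^2 / 17) := by
        rw [mul_pow, hC1def, div_pow, sq (Real.exp _), ← Real.exp_add,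
          show (8/17) * ‖Δ‖^2 - ‖Δ‖^2/2 + ((8/17) * ‖Δ‖^2 - ‖Δ‖^2/2) = -‖Δ‖^2/17 by ring]
        rw [div_eq_mul_inv, ← inv_pow]
      have h6 : 0 ≤ g Δ x := by simp only [hgdef]; positivity
      calc (w Δ x)^2 ≤ C1 * Real.exp (-‖Δ‖^2 / 17) := h5 ▸ h4
        _ ≤ C1 * Real.exp (-‖Δ‖^2 / 17) + g Δ x := le_add_of_nonneg_right h6
    · -- use w ≤ 1 and g ≥ 1
      push_neg at hcase
      have hw1 : w Δ x ≤ 1 := by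
        simp only [hwdef]
        apply div_le_one_of_le₀
        · nlinarith
        · exact hS.le
      have hg1 : (1:ℝ) ≤ g Δ x := by
        simp only [hgdef]
        apply Real.one_le_exp
        nlinarith
      have h8 : (w Δ x)^2 ≤ 1 := by nlinarith [hwnn Δ x]
      have h7 : 0 ≤ C1 * Real.exp (-‖Δ‖^2 / 17) := by positivity
      linarith
  -- the key product identity q * g
  have hqg : ∀ Δ x : EuclideanSpace ℝ (Fin d), q x * g Δ x
      = Real.exp (-(32/289) * ‖Δ‖^2) * (c0 * Real.exp (-‖x - ((8:ℝ)/17) • Δ‖^2 / 2)) := by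
    intro Δ x
    rw [hq]
    simp only [hgdef]
    rw [mul_assoc, ← Real.exp_add, mul_comm (Real.exp (-(32/289) * ‖Δ‖^2)), mul_assoc,
      ← Real.exp_add]
    congr 2
    rw [norm_sub_sq_real, real_inner_smul_right, norm_smul]
    rw [Real.norm_eq_abs, abs_of_nonneg (by norm_num : (0:ℝ) ≤ (8:ℝ)/17)]
    ring
  -- the first claim
  have hmain : ∀ Δ, F Δ ≤ ((1 - π')^2 * π'⁻¹^2 + 5^d) * ‖Δ‖^2 * Real.exp (-‖Δ‖^2 / 17) := by
    intro Δ
    have hFrw : F Δ = ∫ x, q x * ((w Δ x)^2 * ‖Δ‖^2) := by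
      rw [hF, hQint]
      congr 1
      funext x
      rw [hscore Δ x, norm_smul, mul_pow, Real.norm_eq_abs, sq_abs]
    set BV : EuclideanSpace ℝ (Fin d) → ℝ := fun x =>
      q x * (‖Δ‖^2 * (C1 * Real.exp (-‖Δ‖^2 / 17) + g Δ x)) with hBVdef
    have hBVeq : BV = fun x => (‖Δ‖^2 * (C1 * Real.exp (-‖Δ‖^2 / 17))) * q x
        + ‖Δ‖^2 * (Real.exp (-(32/289) * ‖Δ‖^2)
            * (c0 * Real.exp (-‖x - ((8:ℝ)/17) • Δ‖^2 / 2))) := by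
      funext x
      simp only [hBVdef]
      rw [mul_add, ← hqg Δ x]
      ring
    have hBVint : Integrable BV := by
      rw [hBVeq]
      exact (hqint.const_mul _).add
        ((((gauss_integrable d (((8:ℝ)/17) • Δ)).const_mul c0).const_mul _).const_mul _)
    have hle : F Δ ≤ ∫ x, BV x := by
      rw [hFrw]
      refine integral_mono_of_nonneg
        (ae_of_all _ fun x => mul_nonneg (hqnn x) (by positivity)) hBVint
        (ae_of_all _ fun x => ?_)
      simp only [hBVdef]
      have h9 := hptwise Δ x
      have hq0 := hqnn x
      have h10 : w Δ x ^ 2 * ‖Δ‖^2 ≤ (C1 * Real.exp (-‖Δ‖^2 / 17) + g Δ x) * ‖Δ‖^2 :=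
        mul_le_mul_of_nonneg_right h9 (sq_nonneg _)
      have h11 : q x * ((C1 * Real.exp (-‖Δ‖^2 / 17) + g Δ x) * ‖Δ‖^2)
          = q x * (‖Δ‖^2 * (C1 * Real.exp (-‖Δ‖^2 / 17) + g Δ x)) := by ring
      have h12 := mul_le_mul_of_nonneg_left h10 hq0
      linarith
    have hBVval : ∫ x, BV x = ‖Δ‖^2 * (C1 * Real.exp (-‖Δ‖^2 / 17))
        + ‖Δ‖^2 * Real.exp (-(32/289) * ‖Δ‖^2) := by
      rw [hBVeq]
      rw [integral_add ((hqint.const_mul _))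
        ((((gauss_integrable d (((8:ℝ)/17) • Δ)).const_mul c0).const_mul _).const_mul _)]
      rw [integral_const_mul, hqi, integral_const_mul, integral_const_mul, integral_const_mul,
        gauss_int, hc0']
      ring
    have hexple : Real.exp (-(32/289) * ‖Δ‖^2) ≤ Real.exp (-‖Δ‖^2 / 17) := by
      apply Real.exp_le_exp.mpr
      nlinarith [sq_nonneg (‖Δ‖ : ℝ)]
    have h5d : (1:ℝ) ≤ 5^d := one_le_pow₀ (by norm_num : (1:ℝ) ≤ 5)
    calc F Δ ≤ ∫ x, BV x := hle
      _ = ‖Δ‖^2 * (C1 * Real.exp (-‖Δ‖^2 / 17)) + ‖Δ‖^2 * Real.exp (-(32/289) * ‖Δ‖^2) :=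
          hBVval
      _ ≤ ((1 - π')^2 * π'⁻¹^2 + 5^d) * ‖Δ‖^2 * Real.exp (-‖Δ‖^2 / 17) := by
          rw [← hC1def]
          have h1 : ‖Δ‖^2 * Real.exp (-(32/289) * ‖Δ‖^2) ≤ ‖Δ‖^2 * Real.exp (-‖Δ‖^2 / 17) :=
            mul_le_mul_of_nonneg_left hexple (sq_nonneg _)
          have h2 : ‖Δ‖^2 * Real.exp (-‖Δ‖^2 / 17)
              ≤ 5^d * (‖Δ‖^2 * Real.exp (-‖Δ‖^2 / 17)) :=
            le_mul_of_one_le_left (by positivity) h5d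
          have h4 : (C1 + 5^d) * ‖Δ‖^2 * Real.exp (-‖Δ‖^2 / 17)
              = ‖Δ‖^2 * (C1 * Real.exp (-‖Δ‖^2 / 17))
                + 5^d * (‖Δ‖^2 * Real.exp (-‖Δ‖^2 / 17)) := by ring
          linarith
  refine ⟨hmain, ?_⟩
  -- little-o part
  have hF0 : ∀ Δ, 0 ≤ F Δ := fun Δ => by
    rw [hF]
    exact integral_nonneg fun x => by positivity
  have hbigO : F =O[Filter.comap (fun Δ : EuclideanSpace ℝ (Fin d) => ‖Δ‖) atTop]
      ((fun t : ℝ => t^2 * Real.exp (-t^2 / 17)) ∘ fun Δ : EuclideanSpace ℝ (Fin d) => ‖Δ‖) := by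
    apply IsBigO.of_bound ((1 - π')^2 * π'⁻¹^2 + 5^d)
    apply Filter.Eventually.of_forall
    intro Δ
    have h1 := hmain Δ
    have h2 := hF0 Δ
    rw [Real.norm_eq_abs, abs_of_nonneg h2, Function.comp_apply, Real.norm_eq_abs,
      abs_of_nonneg (by positivity)]
    linarith [h1]
  have h1d : (fun t : ℝ => t^2 * Real.exp (-t^2 / 17)) =o[atTop]
      fun t : ℝ => Real.exp (-t^2 / 32) := by
    apply isLittleO_of_tendsto (fun x h => absurd h (Real.exp_ne_zero _))
    have h2 : Tendsto (fun s : ℝ => s * Real.exp (-s)) atTop (nhds 0) := by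
      have := Real.tendsto_pow_mul_exp_neg_atTop_nhds_zero 1
      simpa using this
    have h3 : Tendsto (fun t : ℝ => (15/544) * t^2) atTop atTop :=
      (tendsto_pow_atTop (two_ne_zero)).const_mul_atTop (by norm_num)
    have h4 := (h2.comp h3).const_mul (544/15 : ℝ)
    rw [mul_zero] at h4
    apply h4.congr
    intro t
    simp only [Function.comp_apply]
    have he : Real.exp (-t^2/17) = Real.exp (-((15/544) * t^2)) * Real.exp (-t^2/32) := by
      rw [← Real.exp_add]; congr 1; ring
    rw [he]
    field_simp [Real.exp_ne_zero]
  have hlo : ((fun t : ℝ => t^2 * Real.exp (-t^2 / 17)) ∘ fun Δ : EuclideanSpace ℝ (Fin d) => ‖Δ‖)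
      =o[Filter.comap (fun Δ : EuclideanSpace ℝ (Fin d) => ‖Δ‖) atTop]
      ((fun t : ℝ => Real.exp (-t^2 / 32)) ∘ fun Δ : EuclideanSpace ℝ (Fin d) => ‖Δ‖) :=
    h1d.comp_tendsto tendsto_comap
  exact hbigO.trans_isLittleO hlo
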